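/- For every positive integer t, scc(K_t(2)) ≤ t·σ(t), where σ(t) = min{ k : k a positive integer with t ≤ C(k−1, ⌈k/2⌉) } and C(·,·) denotes the binomial coefficient. -/

import Mathlib

open Finset

/-- A clique covering of `G`: a finite family of cliques covering every edge. -/
def IsCliqueCover {V : Type*} (G : SimpleGraph V) (𝒞 : Finset (Finset V)) : Prop :=
  (∀ C ∈ 𝒞, G.IsClique (C : Set V)) ∧
  ∀ u v, G.Adj u v → ∃ C ∈ 𝒞, u ∈ C ∧ v ∈ C

/-- A clique partition of `G`: every edge lies in exactly one clique of the family. -/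
def IsCliquePartition {V : Type*} (G : SimpleGraph V) (𝒞 : Finset (Finset V)) : Prop :=
  (∀ C ∈ 𝒞, G.IsClique (C : Set V)) ∧
  ∀ u v, G.Adj u v → ∃! C, C ∈ 𝒞 ∧ u ∈ C ∧ v ∈ C

/-- The sigma clique cover number: minimum total size of cliques in a clique covering. -/
noncomputable def scc {V : Type*} (G : SimpleGraph V) : ℕ :=
  sInf {k | ∃ 𝒞, IsCliqueCover G 𝒞 ∧ ∑ C ∈ 𝒞, C.card = k}

/-- The sigma clique partition number: minimum total size of cliques in a clique partition. -/
noncomputable def scp {V : Type*} (G : SimpleGraph V) : ℕ :=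
  sInf {k | ∃ 𝒞, IsCliquePartition G 𝒞 ∧ ∑ C ∈ 𝒞, C.card = k}

/-- The clique cover number: minimum number of cliques in a clique covering. -/
noncomputable def cc {V : Type*} (G : SimpleGraph V) : ℕ :=
  sInf {k | ∃ 𝒞, IsCliqueCover G 𝒞 ∧ 𝒞.card = k}

/-- The clique partition number: minimum number of cliques in a clique partition. -/
noncomputable def cp {V : Type*} (G : SimpleGraph V) : ℕ :=
  sInf {k | ∃ 𝒞, IsCliquePartition G 𝒞 ∧ 𝒞.card = k}

/-- `scc'`: the minimum total size of cliques over clique coverings achieving `cc G`. -/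
noncomputable def scc' {V : Type*} (G : SimpleGraph V) : ℕ :=
  sInf {k | ∃ 𝒞, IsCliqueCover G 𝒞 ∧ 𝒞.card = cc G ∧ ∑ C ∈ 𝒞, C.card = k}

/-- The Cocktail party graph `K_t(2)`: the complete graph on `2t` vertices minus a perfect
matching. Vertices are pairs `(i, a)`; two vertices are adjacent iff their first
coordinates differ. -/
def cocktailParty (t : ℕ) : SimpleGraph (Fin t × Fin 2) where
  Adj u v := u.1 ≠ v.1
  symm := ⟨fun _ _ h => h.symm⟩
  loopless := ⟨fun _ h => h rfl⟩

/-- `σ(t) = min { k : k ≥ 1, t ≤ C(k − 1, ⌈k/2⌉) }`. -/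
noncomputable def sigma (t : ℕ) : ℕ :=
  sInf {k | 1 ≤ k ∧ t ≤ Nat.choose (k - 1) ((k + 1) / 2)}

/-- For every positive integer `t`, `scc(K_t(2)) ≤ t · σ(t)`. -/

lemma two_mul_le_centralBinom (t : ℕ) (ht : 1 ≤ t) : 2 * t ≤ Nat.centralBinom t := by
  induction t with
  | zero => omega
  | succ n ih =>
    rcases Nat.eq_zero_or_pos n with h | h
    · subst h
      simp [Nat.centralBinom, Nat.choose]
    · have key := Nat.succ_mul_centralBinom_succ n
      have hn := ih h
      nlinarith [Nat.centralBinom_pos (n + 1)]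

lemma sigma_witness (t : ℕ) (ht : 1 ≤ t) :
    (2 * t) ∈ {k | 1 ≤ k ∧ t ≤ Nat.choose (k - 1) ((k + 1) / 2)} := by
  obtain ⟨m, rfl⟩ : ∃ m, t = m + 1 := ⟨t - 1, by omega⟩
  refine ⟨by omega, ?_⟩
  have h1 : (2 * (m + 1) + 1) / 2 = m + 1 := by omega
  have h2 : 2 * (m + 1) - 1 = 2 * m + 1 := by omega
  rw [h1, h2]
  have hcb : Nat.centralBinom (m + 1)
      = Nat.choose (2 * m + 1) m + Nat.choose (2 * m + 1) (m + 1) := by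
    unfold Nat.centralBinom
    have : 2 * (m + 1) = (2 * m + 1) + 1 := by omega
    rw [this, Nat.choose_succ_succ]
  have hsymm : Nat.choose (2 * m + 1) m = Nat.choose (2 * m + 1) (m + 1) := by
    have h3 : (2 * m + 1) - (m + 1) = m := by omega
    have := Nat.choose_symm (n := 2 * m + 1) (k := m + 1) (by omega)
    rwa [h3] at this
  have := two_mul_le_centralBinom (m + 1) (by omega)
  omega

lemma cocktail_cover (t k s : ℕ) (ht : 1 ≤ t) (hk1 : 1 ≤ k) (hs : s = (k+1)/2)
    (f : Fin t ↪ {A // A ∈ Finset.powersetCard s (univ : Finset (Fin (k-1)))}) :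
    ∃ 𝒞, IsCliqueCover (cocktailParty t) 𝒞 ∧ ∑ C ∈ 𝒞, C.card ≤ t * k := by
  classical
  set A : Fin t → Finset (Fin (k-1)) := fun i => (f i).1 with hAdef
  have hAcard : ∀ i, (A i).card = s := fun i => ((mem_powersetCard.mp (f i).2)).2
  have hAinj : Function.Injective A := fun i j h => f.injective (Subtype.ext h)
  set B : Fin t → Finset (Fin k) := fun i => (A i).map (Fin.castLEEmb (Nat.sub_le k 1)) with hBdef
  set C : Fin k → Finset (Fin t × Fin 2) :=
    fun j => univ.filter (fun v => if j ∈ B v.1 then v.2 = 0 else v.2 = 1) with hCdef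
  have hCmem : ∀ j (w : Fin t × Fin 2),
      w ∈ C j ↔ (if j ∈ B w.1 then w.2 = 0 else w.2 = 1) := by
    intro j w; simp [hCdef]
  -- same first coordinate forces equality within C j
  have hsame : ∀ j (u v : Fin t × Fin 2), u ∈ C j → v ∈ C j → u.1 = v.1 → u = v := by
    intro j u v hu hv h1
    rw [hCmem] at hu hv
    by_cases hj : j ∈ B u.1
    · rw [if_pos hj] at hu
      rw [if_pos (h1 ▸ hj)] at hv
      exact Prod.ext h1 (hu.trans hv.symm)
    · rw [if_neg hj] at hu
      rw [if_neg (h1 ▸ hj)] at hv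
      exact Prod.ext h1 (hu.trans hv.symm)
  have hclique : ∀ j, (cocktailParty t).IsClique (C j : Set (Fin t × Fin 2)) := by
    intro j
    rw [SimpleGraph.isClique_iff]
    intro u hu v hv huv
    show u.1 ≠ v.1
    exact fun h1 => huv (hsame j u v hu hv h1)
  -- the last index of Fin k is in no B i
  have hlast : ∀ i, (⟨k - 1, by omega⟩ : Fin k) ∉ B i := by
    intro i hmem
    rw [hBdef] at hmem
    obtain ⟨a, _, ha⟩ := Finset.mem_map.mp hmem
    have h2 : (a : ℕ) < k - 1 := a.2
    have h3 : (Fin.castLEEmb (Nat.sub_le k 1) a : Fin k).val = (a : ℕ) := rfl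
    have hv := congrArg Fin.val ha
    simp only [h3] at hv
    omega
  -- difference nonempty for distinct indices
  have hdiff : ∀ i i' : Fin t, i ≠ i' → ∃ a, a ∈ A i ∧ a ∉ A i' := by
    intro i i' hne
    by_contra h
    push_neg at h
    have hsub : A i ⊆ A i' := fun a ha => h a ha
    have heq : A i = A i' := Finset.eq_of_subset_of_card_le hsub (by rw [hAcard, hAcard])
    exact hne (hAinj heq)
  have hBmem : ∀ (i : Fin t) (a : Fin (k-1)),
      a ∈ A i → (Fin.castLEEmb (Nat.sub_le k 1) a) ∈ B i := by
    intro i a ha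
    exact Finset.mem_map_of_mem _ ha
  have hBmem' : ∀ (i : Fin t) (a : Fin (k-1)),
      a ∉ A i → (Fin.castLEEmb (Nat.sub_le k 1) a) ∉ B i := by
    intro i a ha hmem
    obtain ⟨b, hb, hba⟩ := Finset.mem_map.mp hmem
    exact ha ((Fin.castLEEmb (Nat.sub_le k 1)).injective hba ▸ hb)
  -- intersection nonempty
  have hinter : ∀ i i' : Fin t, ∃ a, a ∈ A i ∧ a ∈ A i' := by
    intro i i'
    have h1 := card_union_add_card_inter (A i) (A i')
    have h2 : (A i ∪ A i').card ≤ k - 1 := by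
      calc (A i ∪ A i').card ≤ (univ : Finset (Fin (k-1))).card := card_le_card (subset_univ _)
      _ = k - 1 := by simp
    rw [hAcard, hAcard] at h1
    have : 0 < (A i ∩ A i').card := by omega
    obtain ⟨a, ha⟩ := card_pos.mp this
    exact ⟨a, mem_inter.mp ha⟩
  have hfin2 : ∀ x : Fin 2, x = 0 ∨ x = 1 := by decide
  -- coverage
  have hcover : ∀ u v : Fin t × Fin 2, (cocktailParty t).Adj u v →
      ∃ j : Fin k, u ∈ C j ∧ v ∈ C j := by
    intro u v hadj
    have h1 : u.1 ≠ v.1 := hadj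
    rcases hfin2 u.2 with hu2 | hu2 <;> rcases hfin2 v.2 with hv2 | hv2
    · obtain ⟨a, ha1, ha2⟩ := hinter u.1 v.1
      refine ⟨Fin.castLEEmb (Nat.sub_le k 1) a, ?_, ?_⟩ <;>
        rw [hCmem]
      · rw [if_pos (hBmem _ _ ha1)]; exact hu2
      · rw [if_pos (hBmem _ _ ha2)]; exact hv2
    · obtain ⟨a, ha1, ha2⟩ := hdiff u.1 v.1 h1
      refine ⟨Fin.castLEEmb (Nat.sub_le k 1) a, ?_, ?_⟩ <;> rw [hCmem]
      · rw [if_pos (hBmem _ _ ha1)]; exact hu2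
      · rw [if_neg (hBmem' _ _ ha2)]; exact hv2
    · obtain ⟨a, ha1, ha2⟩ := hdiff v.1 u.1 (Ne.symm h1)
      refine ⟨Fin.castLEEmb (Nat.sub_le k 1) a, ?_, ?_⟩ <;> rw [hCmem]
      · rw [if_neg (hBmem' _ _ ha2)]; exact hu2
      · rw [if_pos (hBmem _ _ ha1)]; exact hv2
    · refine ⟨⟨k - 1, by omega⟩, ?_, ?_⟩ <;> rw [hCmem]
      · rw [if_neg (hlast u.1)]; exact hu2
      · rw [if_neg (hlast v.1)]; exact hv2
  -- each clique has at most t vertices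
  have hCcard : ∀ j, (C j).card ≤ t := by
    intro j
    have := card_le_card_of_injOn (fun v => v.1) (fun v _ => mem_univ v.1)
      (fun u hu v hv h1 => hsame j u v hu hv h1)
    simpa using this
  refine ⟨(univ : Finset (Fin k)).image C, ⟨?_, ?_⟩, ?_⟩
  · intro D hD
    obtain ⟨j, _, rfl⟩ := Finset.mem_image.mp hD
    exact hclique j
  · intro u v hadj
    obtain ⟨j, hu, hv⟩ := hcover u v hadj
    exact ⟨C j, Finset.mem_image_of_mem C (mem_univ j), hu, hv⟩
  · calc ∑ D ∈ (univ : Finset (Fin k)).image C, D.card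
        ≤ ((univ : Finset (Fin k)).image C).card • t := by
          apply Finset.sum_le_card_nsmul
          intro D hD
          obtain ⟨j, _, rfl⟩ := Finset.mem_image.mp hD
          exact hCcard j
      _ ≤ k * t := by
          have h := Finset.card_image_le (s := (univ : Finset (Fin k))) (f := C)
          simp only [card_univ, Fintype.card_fin, smul_eq_mul] at *
          exact Nat.mul_le_mul_right t h
      _ = t * k := Nat.mul_comm k t

theorem stmt_15' (t : ℕ) (ht : 1 ≤ t) : scc (cocktailParty t) ≤ t * sigma t := by
  classical
  have hmem : sigma t ∈ {k | 1 ≤ k ∧ t ≤ Nat.choose (k - 1) ((k + 1) / 2)} :=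
    Nat.sInf_mem ⟨_, sigma_witness t ht⟩
  obtain ⟨hk1, hk2⟩ := hmem
  set k := sigma t with hkdef
  set s := (k + 1) / 2 with hsdef
  have hcard : Fintype.card (Fin t)
      ≤ Fintype.card {A // A ∈ Finset.powersetCard s (univ : Finset (Fin (k-1)))} := by
    rw [Fintype.card_coe, Finset.card_powersetCard, Fintype.card_fin, card_univ, Fintype.card_fin]
    exact hk2
  obtain ⟨f⟩ := Function.Embedding.nonempty_iff_card_le.mpr hcard
  obtain ⟨𝒞, hcover, hsum⟩ := cocktail_cover t k s ht hk1 hsdef f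
  exact le_trans (Nat.sInf_le ⟨𝒞, hcover, rfl⟩) hsum

theorem stmt_15 (t : ℕ) (ht : 1 ≤ t) : scc (cocktailParty t) ≤ t * sigma t :=
  stmt_15' t ht
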